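/- arXiv:2006.14823 — 3 statements merged into one kernel-verified Lean document; each statement's English description precedes it below -/
import Mathlib

section
/- Let Ω ⊂ ℝ² be a bounded Lipschitz domain, k ∈ ℕ*, and a₁, …, a_k, b₁, …, b_k ∈ Ω. If 2 max_{1≤i≤k} |a_i − b_i| < τ ≤ ρ̄(b₁,…,b_k)/3, then there exists a diffeomorphism Φ : Ω → Ω such that (i) Φ(x) = x for every x ∈ Ω ∖ ⋃_{i=1}^k B_{2τ}(b_i); (ii) Φ(x) = x + a_i − b_i for each i and every x ∈ B_τ(b_i); (iii) the operator norm bound |DΦ(x) − id| ≤ (2/τ) max_{1≤i≤k} |a_i − b_i| holds for every x ∈ Ω. -/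
open MeasureTheory Metric Set Filter Topology
open scoped ENNReal NNReal

noncomputable section

namespace Paper

/-- The plane `ℝ²`. -/
abbrev R2 : Type := EuclideanSpace ℝ (Fin 2)

/-- The period `2π` used to parametrise the circle `S¹` by `ℝ`. -/
def tp : ℝ := 2 * Real.pi

/-- The standard parametrisation of the unit circle in the plane. -/
def sc (t : ℝ) : R2 := (EuclideanSpace.equiv (Fin 2) ℝ).symm ![Real.cos t, Real.sin t]

variable {E : Type*} [NormedAddCommGroup E] [NormedSpace ℝ E]

/-- A loop with values in `N`, `2π`-periodically parametrised by `ℝ`. -/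
def IsLoopIn (N : Set E) (γ : ℝ → E) : Prop :=
  Function.Periodic γ tp ∧ ∀ t, γ t ∈ N

/-- The length of a loop. -/
def loopLength (γ : ℝ → E) : ℝ := ∫ t in (0:ℝ)..tp, ‖deriv γ t‖

/-- Mean oscillation of `f` over the interval `(a - r, a + r)`. -/
def meanOsc (f : ℝ → E) (a r : ℝ) : ℝ≥0∞ :=
  (∫⁻ s in Set.Ioo (a - r) (a + r), ∫⁻ t in Set.Ioo (a - r) (a + r),
      (‖f s - f t‖₊ : ℝ≥0∞)) / (ENNReal.ofReal (2 * r)) ^ 2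

/-- `f` has vanishing mean oscillation. -/
def IsVMO (f : ℝ → E) : Prop :=
  AEStronglyMeasurable f volume ∧
    Tendsto (fun δ : ℝ => ⨆ a : ℝ, ⨆ r ∈ Set.Ioc (0:ℝ) δ, meanOsc f a r)
      (nhdsWithin 0 (Set.Ioi 0)) (nhds 0)

/-- A distance inducing the `VMO` topology (a BMO-type part plus an `L¹` part). -/
def vmoDist (f g : ℝ → E) : ℝ≥0∞ :=
  (⨆ a : ℝ, ⨆ r ∈ Set.Ioc (0:ℝ) (1:ℝ), meanOsc (fun t => f t - g t) a r)
    + ∫⁻ t in Set.Ioo (0:ℝ) tp, (‖f t - g t‖₊ : ℝ≥0∞)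

/-- Membership in `VMO(S¹, N)`. -/
def MemVMOLoop (N : Set E) (f : ℝ → E) : Prop :=
  Function.Periodic f tp ∧ (∀ᵐ t : ℝ, f t ∈ N) ∧ IsVMO f

/-- Two maps are homotopic in `VMO(S¹, N)`: they are joined by a path of `VMO` loops
which is continuous for the `VMO` distance. -/
def VMOHomotopic (N : Set E) (f g : ℝ → E) : Prop :=
  ∃ H : ℝ → ℝ → E,
    (∀ s ∈ Set.Icc (0:ℝ) 1, MemVMOLoop N (H s)) ∧
    (∀ s₀ ∈ Set.Icc (0:ℝ) 1,
      Tendsto (fun s => vmoDist (H s) (H s₀)) (nhdsWithin s₀ (Set.Icc 0 1)) (nhds 0)) ∧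
    H 0 = f ∧ H 1 = g

/-- Minimal length `λ(γ)` in the `VMO`-homotopy class of `γ`. -/
def minLength (N : Set E) (γ : ℝ → E) : ℝ :=
  sInf { L : ℝ | ∃ γ' : ℝ → E, ContDiff ℝ 1 γ' ∧ IsLoopIn N γ' ∧ VMOHomotopic N γ' γ ∧
    L = loopLength γ' }

/-- A minimising closed geodesic: a constant-speed `C¹` loop whose length is minimal
in its free homotopy class. -/
def IsMinGeodesic (N : Set E) (γ : ℝ → E) : Prop :=
  ContDiff ℝ 1 γ ∧ IsLoopIn N γ ∧ loopLength γ = minLength N γ ∧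
  ∀ s t : ℝ, ‖deriv γ s‖ = ‖deriv γ t‖

/-- Gagliardo `W^{1/2,2}` seminorm of a loop. -/
def gagliardo (γ : ℝ → E) : ℝ≥0∞ :=
  ∫⁻ s in Set.Ioo (0:ℝ) tp, ∫⁻ t in Set.Ioo (0:ℝ) tp,
    ((‖γ s - γ t‖₊ : ℝ≥0∞)) ^ 2 / (ENNReal.ofReal (dist s t)) ^ 2

/-- Membership in `W^{1/2,2}(S¹, N)`. -/
def MemW12HalfLoop (N : Set E) (γ : ℝ → E) : Prop :=
  Function.Periodic γ tp ∧ AEStronglyMeasurable γ volume ∧ (∀ᵐ t : ℝ, γ t ∈ N) ∧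
  gagliardo γ < ⊤ ∧ (∫⁻ t in Set.Ioo (0:ℝ) tp, (‖γ t‖₊ : ℝ≥0∞) ^ 2) < ⊤

/-- Strong convergence in `W^{1/2,2}(S¹, E)`. -/
def W12HalfTendsto (γn : ℕ → ℝ → E) (γ : ℝ → E) : Prop :=
  Tendsto (fun n => gagliardo (fun t => γn n t - γ t)
      + ∫⁻ t in Set.Ioo (0:ℝ) tp, (‖γn n t - γ t‖₊ : ℝ≥0∞) ^ 2) atTop (nhds 0)

/-- Squared Frobenius norm of a linear map on the plane. -/
def fro2 (L : R2 →L[ℝ] E) : ℝ := ∑ i : Fin 2, ‖L (EuclideanSpace.single i (1:ℝ))‖ ^ 2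

/-- Dirichlet energy `∫_A |Du|²/2`. -/
def dirE (A : Set R2) (u : R2 → E) : ℝ := ∫ x in A, fro2 (fderiv ℝ u x) / 2

/-- Membership in `W^{1,2}(A, N)`. -/
def MemW12 (A : Set R2) (N : Set E) (u : R2 → E) : Prop :=
  AEStronglyMeasurable u (volume.restrict A) ∧
  (∀ᵐ x ∂volume.restrict A, u x ∈ N) ∧
  (∀ᵐ x ∂volume.restrict A, DifferentiableAt ℝ u x) ∧
  (∫⁻ x in A, ENNReal.ofReal (fro2 (fderiv ℝ u x))) < ⊤

/-- Squared Frobenius norm of a linear map on the cylinder `ℝ × ℝ`. -/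
def fro2' (L : ℝ × ℝ →L[ℝ] E) : ℝ := ‖L (1, 0)‖ ^ 2 + ‖L (0, 1)‖ ^ 2

/-- Dirichlet energy on the cylinder `S¹ × [0, T]`. -/
def cylEnergy (T : ℝ) (u : ℝ × ℝ → E) : ℝ :=
  ∫ p in (Set.Ioo (0:ℝ) tp) ×ˢ (Set.Ioo (0:ℝ) T), fro2' (fderiv ℝ u p) / 2

/-- Membership in `W^{1,2}(S¹ × [0,T], N)`. -/
def MemW12Cyl (T : ℝ) (N : Set E) (u : ℝ × ℝ → E) : Prop :=
  (∀ s t : ℝ, u (s + tp, t) = u (s, t)) ∧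
  AEStronglyMeasurable u (volume.restrict ((Set.Ioo (0:ℝ) tp) ×ˢ (Set.Ioo (0:ℝ) T))) ∧
  (∀ᵐ p ∂volume.restrict ((Set.Ioo (0:ℝ) tp) ×ˢ (Set.Ioo (0:ℝ) T)), u p ∈ N) ∧
  (∀ᵐ p ∂volume.restrict ((Set.Ioo (0:ℝ) tp) ×ˢ (Set.Ioo (0:ℝ) T)), DifferentiableAt ℝ u p) ∧
  (∫⁻ p in (Set.Ioo (0:ℝ) tp) ×ˢ (Set.Ioo (0:ℝ) T), ENNReal.ofReal (fro2' (fderiv ℝ u p))) < ⊤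

/-- Synharmony between two loops `γ` and `β`. -/
def synhar (N : Set E) (γ β : ℝ → E) : EReal :=
  sInf { c : EReal | ∃ (T : ℝ) (u : ℝ × ℝ → E), 0 < T ∧ MemW12Cyl T N u ∧
    (∀ s, u (s, 0) = γ s) ∧ (∀ s, u (s, T) = β s) ∧
    c = ((cylEnergy T u - (minLength N γ) ^ 2 / (8 * Real.pi ^ 2) * (tp * T) : ℝ) : EReal) }

/-- The boundary of `Ω` is locally the graph of a Lipschitz function. -/
def HasLipschitzBoundary (Ω : Set R2) : Prop :=
  ∀ x ∈ frontier Ω, ∃ (r : ℝ) (f : ℝ → ℝ) (K : ℝ≥0) (e : R2 ≃ₗᵢ[ℝ] R2),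
    0 < r ∧ LipschitzWith K f ∧
    ∀ y ∈ Metric.ball x r,
      (y ∈ Ω ↔ f (((EuclideanSpace.equiv (Fin 2) ℝ) (e (y - x))) 0)
        < ((EuclideanSpace.equiv (Fin 2) ℝ) (e (y - x))) 1)

/-- A bounded Lipschitz domain in the plane. -/
def IsLipschitzDomain (Ω : Set R2) : Prop :=
  IsOpen Ω ∧ IsConnected Ω ∧ Bornology.IsBounded Ω ∧ HasLipschitzBoundary Ω

/-- The radius `ρ̄(a₁, …, a_k)`. -/
def rbar (Ω : Set R2) {ι : Type*} (a : ι → R2) : ℝ :=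
  sInf ({ d : ℝ | ∃ i j, i ≠ j ∧ d = dist (a i) (a j) / 2 }
    ∪ { d : ℝ | ∃ i, d = Metric.infDist (a i) Ωᶜ })

/-- `(γ_i)` is a topological resolution of the boundary datum `g` (Sobolev version). -/
def IsTopResolutionW (Ω : Set R2) (N : Set E) (g : R2 → E) {ι : Type*} (γ : ι → ℝ → E) : Prop :=
  ∃ (a : ι → R2) (ρ : ℝ), (∀ i, a i ∈ Ω) ∧ Function.Injective a ∧ 0 < ρ ∧ ρ < rbar Ω a ∧
    ∃ u : R2 → E, MemW12 (Ω \ ⋃ i, Metric.closedBall (a i) ρ) N u ∧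
      (∀ x ∈ frontier Ω, u x = g x) ∧ ∀ i t, u (a i + ρ • sc t) = γ i t

/-- The singular energy `E^sg(g)` of a boundary datum. -/
def Esg (Ω : Set R2) (N : Set E) (g : R2 → E) : ℝ :=
  sInf { c : ℝ | ∃ (k : ℕ) (γ : Fin k → ℝ → E), 0 < k ∧ IsTopResolutionW Ω N g γ ∧
    c = ∑ i, (minLength N (γ i)) ^ 2 / (4 * Real.pi) }

/-- A minimal topological resolution of `g`. -/
def IsMinimalTopResolution (Ω : Set R2) (N : Set E) (g : R2 → E) {ι : Type*} [Fintype ι]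
    (γ : ι → ℝ → E) : Prop :=
  IsTopResolutionW Ω N g γ ∧
  (∑ i, (minLength N (γ i)) ^ 2 / (4 * Real.pi)) = Esg Ω N g ∧
  ∀ i, 0 < minLength N (γ i)

/-- The geometrical energy outside disks `E^{geom,ρ}`. -/
def Egeomρ (Ω : Set R2) (N : Set E) (g : R2 → E) {ι : Type*} (γ : ι → ℝ → E)
    (a : ι → R2) (ρ : ℝ) : ℝ :=
  sInf { c : ℝ | ∃ u : R2 → E, MemW12 (Ω \ ⋃ i, Metric.closedBall (a i) ρ) N u ∧
    (∀ x ∈ frontier Ω, u x = g x) ∧ (∀ i t, u (a i + ρ • sc t) = γ i t) ∧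
    c = dirE (Ω \ ⋃ i, Metric.closedBall (a i) ρ) u }

/-- The topological energy outside disks `E^{top,ρ}`. -/
def Etopρ (Ω : Set R2) (N : Set E) (g : R2 → E) {ι : Type*} (γ : ι → ℝ → E)
    (a : ι → R2) (ρ : ℝ) : ℝ :=
  sInf { c : ℝ | ∃ u : R2 → E, MemW12 (Ω \ ⋃ i, Metric.closedBall (a i) ρ) N u ∧
    (∀ x ∈ frontier Ω, u x = g x) ∧
    (∀ i, VMOHomotopic N (fun t => u (a i + ρ • sc t)) (γ i)) ∧
    c = dirE (Ω \ ⋃ i, Metric.closedBall (a i) ρ) u }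

/-- The logarithmic correction `∑ λ(γ_i)²/(4π) log(1/ρ)`. -/
def renCor (N : Set E) {ι : Type*} [Fintype ι] (γ : ι → ℝ → E) (ρ : ℝ) : ℝ :=
  (∑ i, (minLength N (γ i)) ^ 2 / (4 * Real.pi)) * Real.log (1 / ρ)

/-- The geometrical renormalised energy `E^{geom}`. -/
def Egeom (Ω : Set R2) (N : Set E) (g : R2 → E) {ι : Type*} [Fintype ι] (γ : ι → ℝ → E)
    (a : ι → R2) : ℝ :=
  sInf { c : ℝ | ∃ ρ ∈ Set.Ioo (0:ℝ) (rbar Ω a), c = Egeomρ Ω N g γ a ρ - renCor N γ ρ }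

/-- The topological renormalised energy `E^{top}`. -/
def Etop (Ω : Set R2) (N : Set E) (g : R2 → E) {ι : Type*} [Fintype ι] (γ : ι → ℝ → E)
    (a : ι → R2) : ℝ :=
  sSup { c : ℝ | ∃ ρ ∈ Set.Ioo (0:ℝ) (rbar Ω a), c = Etopρ Ω N g γ a ρ - renCor N γ ρ }

/-- `u` is an `N`-valued minimising harmonic map in `A` with respect to its own
boundary conditions. -/
def IsMinimizingMap (A : Set R2) (N : Set E) (u : R2 → E) : Prop :=
  MemW12 A N u ∧ ∀ v : R2 → E, MemW12 A N v → (∀ x ∈ frontier A, v x = u x) →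
    dirE A u ≤ dirE A v

/-- The renormalised energy `E^{ren}(u)` of a map relative to the singular set `S`. -/
def renE (Ω : Set R2) (N : Set E) (S : Finset R2) (u : R2 → E) : EReal :=
  Filter.liminf
    (fun ρ : ℝ => ((dirE (Ω \ ⋃ a ∈ S, Metric.closedBall a ρ) u
      - ∑ a ∈ S, (minLength N (fun t => u (a + ρ • sc t))) ^ 2 / (4 * Real.pi)
          * Real.log (1 / ρ) : ℝ) : EReal))
    (nhdsWithin 0 (Set.Ioi 0))

/-- `u` is a renormalisable map: `u ∈ W^{1,2}_{ren}(Ω, N)`. -/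
def MemW12ren (Ω : Set R2) (N : Set E) (u : R2 → E) : Prop :=
  ∃ S : Finset R2, ↑S ⊆ Ω ∧
    (∃ ρ₀ > (0:ℝ), ∀ ρ ∈ Set.Ioo (0:ℝ) ρ₀,
      MemW12 (Ω \ ⋃ a ∈ S, Metric.closedBall a ρ) N u) ∧
    renE Ω N S u < ⊤

/-- `sing(u) = {(a_i, γ_i)}`. -/
def HasSingularities (Ω : Set R2) (N : Set E) (u : R2 → E) {ι : Type*} (a : ι → R2)
    (γ : ι → ℝ → E) : Prop :=
  Function.Injective a ∧ (∀ i, a i ∈ Ω) ∧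
  (∀ x ∈ closure Ω, x ∉ Set.range a → ∃ ε > (0:ℝ), MemW12 (Ω ∩ Metric.ball x ε) N u) ∧
  (∀ i, Tendsto (fun ρ : ℝ => synhar N (fun t => u (a i + ρ • sc t)) (γ i))
      (nhdsWithin 0 (Set.Ioi 0)) (nhds 0)) ∧
  (∀ i, ¬ ∃ y : E, VMOHomotopic N (γ i) (fun _ => y))

end Paper

open Paper

namespace St12Aux

variable {τ : ℝ}

/-- The bump function used to build the cutoff. -/
def bump (hτ : 0 < τ) : ContDiffBump (11 * τ / 8) where
  rIn := τ / 4
  rOut := 3 * τ / 8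
  rIn_pos := by linarith
  rIn_lt_rOut := by linarith

/-- The normalized bump. -/
def ψ (hτ : 0 < τ) : ℝ → ℝ := (bump hτ).normed volume

lemma ψ_nonneg (hτ : 0 < τ) (x : ℝ) : 0 ≤ ψ hτ x := (bump hτ).nonneg_normed x

lemma ψ_cont (hτ : 0 < τ) : Continuous (ψ hτ) := (bump hτ).continuous_normed

lemma ψ_integrable (hτ : 0 < τ) : Integrable (ψ hτ) := (bump hτ).integrable_normed

lemma ψ_integral (hτ : 0 < τ) : ∫ x, ψ hτ x = 1 := (bump hτ).integral_normed

lemma ψ_le (hτ : 0 < τ) (x : ℝ) : ψ hτ x ≤ 2 / τ := by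
  have h := ContDiffBump.normed_le_div_measure_closedBall_rIn (bump hτ) volume x
  have hIn : (bump hτ).rIn = τ / 4 := rfl
  rw [hIn, Real.volume_real_closedBall (by linarith)] at h
  calc ψ hτ x ≤ 1 / (2 * (τ / 4)) := h
    _ = 2 / τ := by field_simp; ring

lemma ψ_zero_left (hτ : 0 < τ) {x : ℝ} (hx : x ≤ τ) : ψ hτ x = 0 := by
  by_contra h
  have hmem : x ∈ Function.support ((bump hτ).normed volume) := h
  rw [(bump hτ).support_normed_eq] at hmem
  have hO : (bump hτ).rOut = 3 * τ / 8 := rfl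
  rw [mem_ball, Real.dist_eq, hO] at hmem
  have := abs_lt.1 hmem
  linarith [this.1]

lemma ψ_zero_right (hτ : 0 < τ) {x : ℝ} (hx : 7 * τ / 4 ≤ x) : ψ hτ x = 0 := by
  by_contra h
  have hmem : x ∈ Function.support ((bump hτ).normed volume) := h
  rw [(bump hτ).support_normed_eq] at hmem
  have hO : (bump hτ).rOut = 3 * τ / 8 := rfl
  rw [mem_ball, Real.dist_eq, hO] at hmem
  have := abs_lt.1 hmem
  linarith [this.2]

/-- The cutoff: `η = 1` on `(-∞, τ]`, `η = 0` on `[7τ/4, ∞)`. -/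
def η (hτ : 0 < τ) (r : ℝ) : ℝ := 1 - ∫ t in (0:ℝ)..r, ψ hτ t

lemma hasDerivAt_η (hτ : 0 < τ) (r : ℝ) : HasDerivAt (η hτ) (-(ψ hτ r)) r := by
  have h1 : HasDerivAt (fun u => ∫ t in (0:ℝ)..u, ψ hτ t) (ψ hτ r) r :=
    ((ψ_cont hτ).integral_hasStrictDerivAt 0 r).hasDerivAt
  have h2 := (hasDerivAt_const r (1:ℝ)).sub h1
  rw [zero_sub] at h2
  exact h2

lemma differentiable_η (hτ : 0 < τ) : Differentiable ℝ (η hτ) :=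
  fun r => (hasDerivAt_η hτ r).differentiableAt

lemma deriv_η (hτ : 0 < τ) : deriv (η hτ) = fun r => -(ψ hτ r) :=
  funext fun r => (hasDerivAt_η hτ r).deriv

lemma contDiff_η (hτ : 0 < τ) : ContDiff ℝ (⊤ : ℕ∞) (η hτ) := by
  rw [show ((⊤ : ℕ∞) : WithTop ℕ∞) = (⊤ : ℕ∞) from rfl]
  exact contDiff_infty_iff_deriv.2 ⟨differentiable_η hτ, by
    rw [deriv_η hτ]; exact ((bump hτ).contDiff_normed (n := ⊤)).neg⟩

lemma integral_zero_of_le (hτ : 0 < τ) {r : ℝ} (hr : r ≤ τ) :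
    (∫ t in (0:ℝ)..r, ψ hτ t) = 0 := by
  rw [intervalIntegral.integral_congr (g := fun _ => (0:ℝ))
    (fun t ht => ?_), intervalIntegral.integral_zero]
  rw [Set.mem_uIcc] at ht
  apply ψ_zero_left hτ
  rcases ht with ⟨_, h2⟩ | ⟨_, h2⟩ <;> linarith

lemma integral_one_of_ge (hτ : 0 < τ) {r : ℝ} (hr : 7 * τ / 4 ≤ r) :
    (∫ t in (0:ℝ)..r, ψ hτ t) = 1 := by
  rw [intervalIntegral.integral_eq_integral_of_support_subset, ψ_integral hτ]
  intro x hx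
  have hmem : x ∈ Function.support ((bump hτ).normed volume) := hx
  rw [(bump hτ).support_normed_eq] at hmem
  have hO : (bump hτ).rOut = 3 * τ / 8 := rfl
  rw [mem_ball, Real.dist_eq, hO] at hmem
  have := abs_lt.1 hmem
  constructor <;> [linarith [this.1]; linarith [this.2]]

lemma η_one (hτ : 0 < τ) {r : ℝ} (hr : r ≤ τ) : η hτ r = 1 := by
  rw [η, integral_zero_of_le hτ hr, sub_zero]

lemma η_zero (hτ : 0 < τ) {r : ℝ} (hr : 7 * τ / 4 ≤ r) : η hτ r = 0 := by
  rw [η, integral_one_of_ge hτ hr, sub_self]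

lemma η_nonneg (hτ : 0 < τ) (r : ℝ) : 0 ≤ η hτ r := by
  rw [η, sub_nonneg]
  rcases le_or_gt r (7 * τ / 4) with h | h
  · have hadd : (∫ t in (0:ℝ)..r, ψ hτ t) + ∫ t in r..(7*τ/4), ψ hτ t
        = ∫ t in (0:ℝ)..(7*τ/4), ψ hτ t :=
      intervalIntegral.integral_add_adjacent_intervals
        (ψ_integrable hτ).intervalIntegrable (ψ_integrable hτ).intervalIntegrable
    have h2 : (0:ℝ) ≤ ∫ t in r..(7*τ/4), ψ hτ t :=
      intervalIntegral.integral_nonneg h (fun t _ => ψ_nonneg hτ t)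
    have h3 : (∫ t in (0:ℝ)..(7*τ/4), ψ hτ t) = 1 := integral_one_of_ge hτ le_rfl
    linarith
  · rw [integral_one_of_ge hτ h.le]

lemma η_le_one (hτ : 0 < τ) (r : ℝ) : η hτ r ≤ 1 := by
  rw [η]
  rcases le_or_gt r τ with h | h
  · rw [integral_zero_of_le hτ h]; norm_num
  · have : (0:ℝ) ≤ ∫ t in (0:ℝ)..r, ψ hτ t :=
      intervalIntegral.integral_nonneg (by linarith) (fun t _ => ψ_nonneg hτ t)
    linarith

lemma η_lip (hτ : 0 < τ) (x y : ℝ) : |η hτ x - η hτ y| ≤ 2 / τ * |x - y| := by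
  have := Convex.norm_image_sub_le_of_norm_hasDerivWithin_le
    (f := η hτ) (f' := fun r => -(ψ hτ r)) (s := Set.univ)
    (fun r _ => (hasDerivAt_η hτ r).hasDerivWithinAt)
    (fun r _ => by
      rw [Real.norm_eq_abs, abs_neg, abs_of_nonneg (ψ_nonneg hτ r)]
      exact ψ_le hτ r)
    convex_univ (Set.mem_univ y) (Set.mem_univ x)
  simpa [Real.norm_eq_abs] using this

end St12Aux

/-- The deformation diffeomorphism: if
`2 maxᵢ |aᵢ − bᵢ| < τ ≤ ρ̄(b₁,…,b_k)/3` then there is a diffeomorphism `Φ : Ω → Ω` equal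
to the identity outside the balls `B_{2τ}(bᵢ)`, to the translation `x ↦ x + aᵢ − bᵢ` on
`B_τ(bᵢ)`, and with `|DΦ − id| ≤ (2/τ) maxᵢ |aᵢ − bᵢ|` everywhere on `Ω`. -/
theorem statement12 (Ω : Set R2) (hΩ : IsLipschitzDomain Ω)
    {k : ℕ} (hk : 0 < k) (a b : Fin k → R2)
    (ha : ∀ i, a i ∈ Ω) (hb : ∀ i, b i ∈ Ω)
    (τ : ℝ) (hτ1 : 2 * (⨆ i, dist (a i) (b i)) < τ) (hτ2 : τ ≤ rbar Ω b / 3) :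
    ∃ Φ : R2 → R2, ContDiff ℝ (⊤ : ℕ∞) Φ ∧ Set.BijOn Φ Ω Ω ∧
      (∀ x ∈ Ω \ ⋃ i, Metric.ball (b i) (2 * τ), Φ x = x) ∧
      (∀ i, ∀ x ∈ Metric.ball (b i) τ, Φ x = x + (a i - b i)) ∧
      (∀ x ∈ Ω, ‖fderiv ℝ Φ x - ContinuousLinearMap.id ℝ R2‖
        ≤ (2 / τ) * ⨆ i, dist (a i) (b i)) := by
  classical
  have hk' : Nonempty (Fin k) := ⟨⟨0, hk⟩⟩
  set M : ℝ := ⨆ i, dist (a i) (b i) with hM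
  have hbdd : BddAbove (Set.range fun i => dist (a i) (b i)) :=
    (Set.finite_range _).bddAbove
  have hMi : ∀ i, dist (a i) (b i) ≤ M := fun i => le_ciSup hbdd i
  have hM0 : 0 ≤ M := le_trans dist_nonneg (hMi ⟨0, hk⟩)
  have hτ : 0 < τ := by linarith
  have hrb : 3 * τ ≤ rbar Ω b := by linarith
  have hbddb : BddBelow ({ d : ℝ | ∃ i j, i ≠ j ∧ d = dist (b i) (b j) / 2 }
      ∪ { d : ℝ | ∃ i, d = Metric.infDist (b i) Ωᶜ }) := by
    refine ⟨0, ?_⟩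
    rintro d (⟨i, j, hij, rfl⟩ | ⟨i, rfl⟩)
    · positivity
    · exact Metric.infDist_nonneg
  have hsep : ∀ i j, i ≠ j → 6 * τ ≤ dist (b i) (b j) := by
    intro i j hij
    have h1 : rbar Ω b ≤ dist (b i) (b j) / 2 :=
      csInf_le hbddb ((Set.mem_union _ _ _).2 (Or.inl ⟨i, j, hij, rfl⟩))
    linarith
  have hball : ∀ i, Metric.ball (b i) (3 * τ) ⊆ Ω := by
    intro i y hy
    by_contra hyΩ
    have h1 : rbar Ω b ≤ Metric.infDist (b i) Ωᶜ :=
      csInf_le hbddb ((Set.mem_union _ _ _).2 (Or.inr ⟨i, rfl⟩))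
    have h2 : Metric.infDist (b i) Ωᶜ ≤ dist (b i) y := Metric.infDist_le_dist_of_mem hyΩ
    rw [mem_ball, dist_comm] at hy
    linarith
  set G : Fin k → R2 → R2 := fun i x => St12Aux.η hτ (‖x - b i‖) • (a i - b i) with hG
  set g : R2 → R2 := fun x => ∑ i, G i x with hgdef
  set Φ : R2 → R2 := fun x => x + g x with hΦdef
  have hGzero : ∀ i x, 7 * τ / 4 ≤ ‖x - b i‖ → G i x = 0 := by
    intro i x hx
    simp only [hG]
    rw [St12Aux.η_zero hτ hx, zero_smul]
  have hGone : ∀ i x, ‖x - b i‖ ≤ τ → G i x = a i - b i := by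
    intro i x hx
    simp only [hG]
    rw [St12Aux.η_one hτ hx, one_smul]
  have hGnorm : ∀ i x, ‖G i x‖ ≤ M := by
    intro i x
    simp only [hG]
    rw [norm_smul, Real.norm_eq_abs, abs_of_nonneg (St12Aux.η_nonneg hτ _)]
    have h3 : ‖a i - b i‖ ≤ M := by rw [← dist_eq_norm]; exact hMi i
    calc St12Aux.η hτ ‖x - b i‖ * ‖a i - b i‖ ≤ 1 * M :=
          mul_le_mul (St12Aux.η_le_one hτ _) h3 (norm_nonneg _) zero_le_one
      _ = M := one_mul M
  have hGsmooth : ∀ i, ContDiff ℝ (⊤ : ℕ∞) (G i) := by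
    intro i
    rw [contDiff_iff_contDiffAt]
    intro x
    rcases lt_or_ge (‖x - b i‖) τ with hx | hx
    · have hopen : IsOpen {y : R2 | ‖y - b i‖ < τ} :=
        isOpen_lt ((continuous_id.sub continuous_const).norm) continuous_const
      have hev : G i =ᶠ[nhds x] fun _ => a i - b i := by
        filter_upwards [hopen.mem_nhds hx] with y hy
        exact hGone i y hy.le
      exact (contDiffAt_const (c := a i - b i)).congr_of_eventuallyEq hev
    · have hx0 : x - b i ≠ 0 := by
        intro h0
        rw [h0, norm_zero] at hx
        linarith
      have h1 : ContDiffAt ℝ (⊤ : ℕ∞) (fun y : R2 => ‖y - b i‖) x :=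
        ContDiffAt.norm ℝ (contDiffAt_id.sub contDiffAt_const) hx0
      simp only [hG]
      exact (((St12Aux.contDiff_η hτ).contDiffAt).comp x h1).smul contDiffAt_const
  have hGdiff : ∀ i, Differentiable ℝ (G i) :=
    fun i => (hGsmooth i).differentiable (by simp)
  set C : ℝ≥0 := Real.toNNReal (2 / τ * M) with hC
  have hCcoe : (C : ℝ) = 2 / τ * M := Real.coe_toNNReal _ (by positivity)
  have hGlip : ∀ i, LipschitzWith C (G i) := by
    intro i
    apply LipschitzWith.of_dist_le_mul
    intro x y
    rw [dist_eq_norm]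
    simp only [hG]
    rw [← sub_smul, norm_smul, Real.norm_eq_abs]
    have h1 : |St12Aux.η hτ ‖x - b i‖ - St12Aux.η hτ ‖y - b i‖|
        ≤ 2 / τ * |‖x - b i‖ - ‖y - b i‖| := St12Aux.η_lip hτ _ _
    have h2 : |‖x - b i‖ - ‖y - b i‖| ≤ ‖x - y‖ := by
      have h := abs_norm_sub_norm_le (x - b i) (y - b i)
      rwa [sub_sub_sub_cancel_right] at h
    have h3 : ‖a i - b i‖ ≤ M := by rw [← dist_eq_norm]; exact hMi i
    have h5 : |St12Aux.η hτ ‖x - b i‖ - St12Aux.η hτ ‖y - b i‖| ≤ 2 / τ * ‖x - y‖ :=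
      le_trans h1 (mul_le_mul_of_nonneg_left h2 (by positivity))
    rw [hCcoe, dist_eq_norm]
    calc |St12Aux.η hτ ‖x - b i‖ - St12Aux.η hτ ‖y - b i‖| * ‖a i - b i‖
        ≤ (2 / τ * ‖x - y‖) * M :=
          mul_le_mul h5 h3 (norm_nonneg _) (by positivity)
      _ = 2 / τ * M * ‖x - y‖ := by ring
  have hGfd : ∀ i x, ‖fderiv ℝ (G i) x‖ ≤ (C : ℝ) :=
    fun i x => norm_fderiv_le_of_lipschitz ℝ (hGlip i)
  have hGfd0 : ∀ i x, (‖x - b i‖ < τ ∨ 7 * τ / 4 < ‖x - b i‖) → fderiv ℝ (G i) x = 0 := by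
    intro i x hx
    rcases hx with hx | hx
    · have hopen : IsOpen {y : R2 | ‖y - b i‖ < τ} :=
        isOpen_lt ((continuous_id.sub continuous_const).norm) continuous_const
      have hev : G i =ᶠ[nhds x] fun _ => a i - b i := by
        filter_upwards [hopen.mem_nhds hx] with y hy
        exact hGone i y hy.le
      rw [hev.fderiv_eq]
      exact fderiv_const_apply _
    · have hopen : IsOpen {y : R2 | 7 * τ / 4 < ‖y - b i‖} :=
        isOpen_lt continuous_const ((continuous_id.sub continuous_const).norm)
      have hev : G i =ᶠ[nhds x] fun _ => (0 : R2) := by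
        filter_upwards [hopen.mem_nhds hx] with y hy
        exact hGzero i y hy.le
      rw [hev.fderiv_eq]
      exact fderiv_const_apply _
  have hgdiff : Differentiable ℝ g := by
    rw [hgdef]
    exact Differentiable.fun_sum (fun i _ => hGdiff i)
  have hgfd : ∀ x, ‖fderiv ℝ g x‖ ≤ 2 / τ * M := by
    intro x
    have hsum : fderiv ℝ g x = ∑ i, fderiv ℝ (G i) x := by
      rw [hgdef]
      exact fderiv_fun_sum (fun i _ => (hGdiff i).differentiableAt)
    by_cases hex : ∃ i, τ ≤ ‖x - b i‖ ∧ ‖x - b i‖ ≤ 7 * τ / 4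
    · obtain ⟨i₀, hi₀⟩ := hex
      have hone : ∀ j ∈ Finset.univ, j ≠ i₀ → fderiv ℝ (G j) x = 0 := by
        intro j _ hj
        apply hGfd0
        right
        have hsep' := hsep i₀ j (Ne.symm hj)
        have e1 : dist (b i₀) x = ‖x - b i₀‖ := by rw [dist_comm, dist_eq_norm]
        have e2 : dist x (b j) = ‖x - b j‖ := dist_eq_norm _ _
        have ht := dist_triangle (b i₀) x (b j)
        linarith [hi₀.2]
      rw [hsum, Finset.sum_eq_single i₀ hone (fun h => absurd (Finset.mem_univ i₀) h)]
      calc ‖fderiv ℝ (G i₀) x‖ ≤ (C : ℝ) := hGfd i₀ x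
        _ = 2 / τ * M := hCcoe
    · push_neg at hex
      have hall : ∀ i ∈ Finset.univ, fderiv ℝ (G i) x = 0 := by
        intro i _
        rcases lt_or_ge (‖x - b i‖) τ with h | h
        · exact hGfd0 i x (Or.inl h)
        · exact hGfd0 i x (Or.inr (hex i h))
      rw [hsum, Finset.sum_eq_zero hall, norm_zero]
      positivity
  have hglip : LipschitzWith C g :=
    lipschitzWith_of_nnnorm_fderiv_le hgdiff (fun x => by
      rw [← NNReal.coe_le_coe, coe_nnnorm, hCcoe]
      exact hgfd x)
  have happrox : ApproximatesLinearOn Φ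
      ((ContinuousLinearEquiv.refl ℝ R2 : R2 ≃L[ℝ] R2) : R2 →L[ℝ] R2) Set.univ C := by
    intro x _ y _
    have e1 : Φ x - Φ y - (ContinuousLinearEquiv.refl ℝ R2 : R2 →L[ℝ] R2) (x - y)
        = g x - g y := by
      simp only [hΦdef, ContinuousLinearEquiv.coe_refl, ContinuousLinearMap.coe_id', id_eq]
      abel
    rw [e1]
    have h := hglip.dist_le_mul x y
    rw [dist_eq_norm, dist_eq_norm] at h
    exact h
  have hnt : Nontrivial R2 := inferInstance
  have hc : Subsingleton R2 ∨
      C < ‖(((ContinuousLinearEquiv.refl ℝ R2).symm : R2 ≃L[ℝ] R2) : R2 →L[ℝ] R2)‖₊⁻¹ := by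
    right
    rw [ContinuousLinearEquiv.refl_symm, ContinuousLinearEquiv.coe_refl,
      ContinuousLinearMap.nnnorm_id, inv_one, ← NNReal.coe_lt_coe, hCcoe, NNReal.coe_one,
      div_mul_eq_mul_div, div_lt_one hτ]
    linarith
  have hinj : Set.InjOn Φ Set.univ := happrox.injOn hc
  have hsurjective : Function.Surjective Φ := happrox.surjective hc
  have hother : ∀ i x, ‖x - b i‖ < 7 * τ / 4 → ∀ j, j ≠ i → G j x = 0 := by
    intro i x hi j hj
    apply hGzero
    have hsep' := hsep i j (Ne.symm hj)
    have e1 : dist (b i) x = ‖x - b i‖ := by rw [dist_comm, dist_eq_norm]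
    have e2 : dist x (b j) = ‖x - b j‖ := dist_eq_norm _ _
    have ht := dist_triangle (b i) x (b j)
    linarith
  refine ⟨Φ, ?_, ⟨?_, ?_, ?_⟩, ?_, ?_, ?_⟩
  · -- smoothness
    rw [hΦdef, hgdef]
    exact contDiff_id.add (ContDiff.sum fun i _ => hGsmooth i)
  · -- MapsTo
    intro x hx
    by_cases hex : ∃ i, ‖x - b i‖ < 7 * τ / 4
    · obtain ⟨i, hi⟩ := hex
      have hgx : g x = G i x := by
        rw [hgdef]
        exact Finset.sum_eq_single i (fun j _ hj => hother i x hi j hj)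
          (fun h => absurd (Finset.mem_univ i) h)
      apply hball i
      rw [mem_ball, dist_eq_norm]
      have e : Φ x - b i = (x - b i) + G i x := by
        simp only [hΦdef, hgx]
        abel
      rw [e]
      calc ‖(x - b i) + G i x‖ ≤ ‖x - b i‖ + ‖G i x‖ := norm_add_le _ _
        _ < 3 * τ := by linarith [hGnorm i x, hi]
    · push_neg at hex
      have hgx : g x = 0 := by
        rw [hgdef]
        exact Finset.sum_eq_zero fun i _ => hGzero i x (hex i)
      have e : Φ x = x := by simp only [hΦdef, hgx, add_zero]
      rw [e]
      exact hx
  · -- InjOn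
    exact hinj.mono (Set.subset_univ Ω)
  · -- SurjOn
    intro y hy
    obtain ⟨x, hxy⟩ := hsurjective y
    refine ⟨x, ?_, hxy⟩
    by_cases hex : ∃ i, ‖x - b i‖ < 7 * τ / 4
    · obtain ⟨i, hi⟩ := hex
      apply hball i
      rw [mem_ball, dist_eq_norm]
      linarith
    · push_neg at hex
      have hgx : g x = 0 := by
        rw [hgdef]
        exact Finset.sum_eq_zero fun i _ => hGzero i x (hex i)
      have e : Φ x = x := by simp only [hΦdef, hgx, add_zero]
      have hxeq : x = y := by rw [← hxy, e]
      rw [hxeq]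
      exact hy
  · -- identity outside
    intro x hx
    have hx2 := hx.2
    simp only [Set.mem_iUnion, mem_ball, not_exists] at hx2
    have hgx : g x = 0 := by
      rw [hgdef]
      refine Finset.sum_eq_zero fun i _ => hGzero i x ?_
      have h := hx2 i
      rw [dist_eq_norm] at h
      have h' := not_lt.1 h
      linarith
    simp only [hΦdef, hgx, add_zero]
  · -- translation inside
    intro i x hx
    rw [mem_ball, dist_eq_norm] at hx
    have hgx : g x = G i x := by
      rw [hgdef]
      refine Finset.sum_eq_single i (fun j _ hj => hother i x (by linarith) j hj)
        (fun h => absurd (Finset.mem_univ i) h)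
    simp only [hΦdef]
    rw [hgx, hGone i x hx.le]
  · -- derivative bound
    intro x _
    have hfd : fderiv ℝ Φ x = ContinuousLinearMap.id ℝ R2 + fderiv ℝ g x := by
      rw [hΦdef]
      rw [fderiv_fun_add differentiableAt_fun_id (hgdiff x), fderiv_id']
    rw [hfd, add_sub_cancel_left]
    exact hgfd x
end
end

section
/- For every finite set 𝓑 of closed balls of ℝ², there exists a finite set 𝓑′ of pairwise disjoint nonempty closed balls of ℝ² such that every ball of 𝓑 is contained in some ball of 𝓑′ (that is, 𝓑 = ⋃_{B′∈𝓑′} {B ∈ 𝓑 : B ⊆ B′}), and ∑_{B′∈𝓑′} diam(B′) = ∑_{B∈𝓑} diam(B). -/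
open MeasureTheory Metric Set Filter Topology
open scoped ENNReal NNReal

noncomputable section

open Paper

lemma merge_balls' (a b : R2) (r s : ℝ) (hr : 0 ≤ r) (hs : 0 ≤ s) (hd : dist a b ≤ r + s) :
    ∃ c : R2, Metric.closedBall a r ⊆ Metric.closedBall c (r + s) ∧
      Metric.closedBall b s ⊆ Metric.closedBall c (r + s) := by
  rcases eq_or_lt_of_le (add_nonneg hr hs) with h0 | h0
  · have hab : a = b := dist_le_zero.mp (by linarith)
    refine ⟨a, Metric.closedBall_subset_closedBall (by linarith), ?_⟩
    rw [← hab]; exact Metric.closedBall_subset_closedBall (by linarith)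
  · set c := a + (s / (r + s)) • (b - a) with hc
    have hne : r + s ≠ 0 := ne_of_gt h0
    have h1 : dist a c ≤ s := by
      have e1 : a - c = (s / (r + s)) • (a - b) := by
        rw [hc]; module
      have : dist a c = (s / (r + s)) * dist a b := by
        rw [dist_eq_norm, e1, norm_smul, Real.norm_eq_abs,
          abs_of_nonneg (div_nonneg hs h0.le), ← dist_eq_norm]
      rw [this]
      calc (s / (r + s)) * dist a b ≤ (s / (r + s)) * (r + s) :=
            mul_le_mul_of_nonneg_left hd (div_nonneg hs h0.le)
        _ = s := div_mul_cancel₀ _ hne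
    have h2 : dist b c ≤ r := by
      have e2 : b - c = (r / (r + s)) • (b - a) := by
        rw [hc]; match_scalars <;> field_simp <;> ring
      have : dist b c = (r / (r + s)) * dist a b := by
        rw [dist_eq_norm, e2, norm_smul, Real.norm_eq_abs,
          abs_of_nonneg (div_nonneg hr h0.le), ← dist_eq_norm, dist_comm]
      rw [this]
      calc (r / (r + s)) * dist a b ≤ (r / (r + s)) * (r + s) :=
            mul_le_mul_of_nonneg_left hd (div_nonneg hr h0.le)
        _ = r := div_mul_cancel₀ _ hne
    exact ⟨c, Metric.closedBall_subset_closedBall' (by linarith),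
      Metric.closedBall_subset_closedBall' (by linarith)⟩

lemma merge_multiset' : ∀ (n : ℕ) (M : Multiset (R2 × ℝ)), M.card = n →
    (∀ p ∈ M, 0 ≤ p.2) →
    ∃ B' : Finset (R2 × ℝ), (∀ q ∈ B', 0 ≤ q.2) ∧
      ((B' : Set (R2 × ℝ)).Pairwise fun p q =>
        Disjoint (Metric.closedBall p.1 p.2) (Metric.closedBall q.1 q.2)) ∧
      (∀ p ∈ M, ∃ q ∈ B', Metric.closedBall p.1 p.2 ⊆ Metric.closedBall q.1 q.2) ∧
      ∑ q ∈ B', 2 * q.2 = (M.map (fun p => 2 * p.2)).sum := by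
  intro n
  induction n using Nat.strong_induction_on with
  | _ n ih =>
    intro M hcard hM
    classical
    by_cases hcase : ∃ p ∈ M, ∃ q ∈ M.erase p,
        ¬ Disjoint (Metric.closedBall p.1 p.2) (Metric.closedBall q.1 q.2)
    · obtain ⟨p, hp, q, hq, hndis⟩ := hcase
      have hq' : q ∈ M := Multiset.mem_of_mem_erase hq
      have hpr : 0 ≤ p.2 := hM p hp
      have hqr : 0 ≤ q.2 := hM q hq'
      obtain ⟨x, hx1, hx2⟩ := Set.not_disjoint_iff.mp hndis
      have hdist : dist p.1 q.1 ≤ p.2 + q.2 := by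
        calc dist p.1 q.1 ≤ dist p.1 x + dist x q.1 := dist_triangle _ _ _
          _ ≤ p.2 + q.2 := by
              rw [Metric.mem_closedBall] at hx1 hx2
              rw [dist_comm p.1 x]; linarith
      obtain ⟨c, hc1, hc2⟩ := merge_balls' p.1 q.1 p.2 q.2 hpr hqr hdist
      set M' : Multiset (R2 × ℝ) := (c, p.2 + q.2) ::ₘ (M.erase p).erase q with hM'
      have hcard1 : (M.erase p).card = M.card - 1 := Multiset.card_erase_of_mem hp
      have hcard2 : ((M.erase p).erase q).card = (M.erase p).card - 1 :=
        Multiset.card_erase_of_mem hq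
      have hge1 : 1 ≤ (M.erase p).card := Multiset.card_pos_iff_exists_mem.mpr ⟨q, hq⟩
      have hcardM' : M'.card < n := by
        rw [hM', Multiset.card_cons]
        omega
      have hM'nonneg : ∀ r ∈ M', 0 ≤ r.2 := by
        intro r hr
        rw [hM', Multiset.mem_cons] at hr
        rcases hr with rfl | hr
        · exact add_nonneg hpr hqr
        · exact hM r (Multiset.mem_of_mem_erase (Multiset.mem_of_mem_erase hr))
      obtain ⟨B', hB1, hB2, hB3, hB4⟩ := ih M'.card hcardM' M' rfl hM'nonneg
      refine ⟨B', hB1, hB2, ?_, ?_⟩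
      · intro r hr
        have hcmem : (c, p.2 + q.2) ∈ M' := Multiset.mem_cons_self _ _
        obtain ⟨q', hq'B, hq'sub⟩ := hB3 _ hcmem
        by_cases hrp : r = p
        · exact ⟨q', hq'B, hrp ▸ (hc1.trans hq'sub)⟩
        by_cases hrq : r = q
        · exact ⟨q', hq'B, hrq ▸ (hc2.trans hq'sub)⟩
        · have : r ∈ (M.erase p).erase q := by
            rw [Multiset.mem_erase_of_ne hrq, Multiset.mem_erase_of_ne hrp]; exact hr
          exact hB3 r (by rw [hM', Multiset.mem_cons]; right; exact this)
      · rw [hB4]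
        have e1 : M = p ::ₘ M.erase p := (Multiset.cons_erase hp).symm
        have e2 : M.erase p = q ::ₘ (M.erase p).erase q := (Multiset.cons_erase hq).symm
        rw [hM', Multiset.map_cons, Multiset.sum_cons]
        conv_rhs => rw [e1, Multiset.map_cons, Multiset.sum_cons, e2,
          Multiset.map_cons, Multiset.sum_cons]
        ring
    · push_neg at hcase
      have hnodup : M.Nodup := by
        rw [Multiset.nodup_iff_count_le_one]
        intro r
        by_contra h
        push_neg at h
        have hr : r ∈ M := Multiset.count_pos.mp (by omega)
        have hre : r ∈ M.erase r := by
          rw [← Multiset.count_pos, Multiset.count_erase_self]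
          omega
        have hd := hcase r hr r hre
        exact Set.not_disjoint_iff.mpr
          ⟨r.1, Metric.mem_closedBall_self (hM r hr),
            Metric.mem_closedBall_self (hM r hr)⟩ hd
      refine ⟨M.toFinset, ?_, ?_, ?_, ?_⟩
      · intro r hr; exact hM r (Multiset.mem_toFinset.mp hr)
      · intro r hr s hs hne
        exact hcase r (Multiset.mem_toFinset.mp hr) s
          ((Multiset.mem_erase_of_ne (Ne.symm hne)).mpr (Multiset.mem_toFinset.mp hs))
      · intro r hr; exact ⟨r, Multiset.mem_toFinset.mpr hr, subset_rfl⟩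
      · rw [Finset.sum]
        congr 1
        rw [Multiset.toFinset_val, Multiset.dedup_eq_self.mpr hnodup]


/-- Merging of balls: any finite collection of closed balls of `ℝ²` can
be covered by a finite collection of pairwise disjoint nonempty closed balls with the same
total sum of diameters. Balls are encoded by their centre and (nonnegative) radius. -/
theorem statement14 (B : Finset (R2 × ℝ)) (hB : ∀ p ∈ B, 0 ≤ p.2) :
    ∃ B' : Finset (R2 × ℝ), (∀ q ∈ B', 0 ≤ q.2) ∧
      ((B' : Set (R2 × ℝ)).Pairwise fun p q =>
        Disjoint (Metric.closedBall p.1 p.2) (Metric.closedBall q.1 q.2)) ∧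
      (∀ p ∈ B, ∃ q ∈ B', Metric.closedBall p.1 p.2 ⊆ Metric.closedBall q.1 q.2) ∧
      ∑ q ∈ B', 2 * q.2 = ∑ p ∈ B, 2 * p.2 := by
  obtain ⟨B', h1, h2, h3, h4⟩ := merge_multiset' B.val.card B.val rfl hB
  exact ⟨B', h1, h2, fun p hp => h3 p hp, h4⟩
end
end

section
/- Let 𝓑₀ be a finite collection of closed balls in ℝ² with ⋃_{B∈𝓑₀} B ≠ ∅. Then for every t ∈ [0, ∞) there exists a finite collection 𝓑(t) of pairwise disjoint nonempty closed balls in ℝ² such that: (i) every ball of 𝓑₀ is contained in some ball of 𝓑(0); (ii) for every 0 ≤ t ≤ s, every ball of 𝓑(t) is contained in some ball of 𝓑(s); (iii) there exist ℓ ∈ ℕ* and disjoint intervals I₁, …, I_ℓ with [0,∞) = ⋃_{j=1}^ℓ I_j such that for each j and every t ∈ I_j, 𝓑(t) = {B̄_{ρ_j^i e^t}(a_j^i) : i = 1, …, k_j} for some centers a_j^i ∈ ℝ² and radii ρ_j^i ≥ 0; (iv) for every t ≥ 0, ∑_{B∈𝓑(t)} diam(B) = e^t ∑_{B∈𝓑₀}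 diam(B). -/
open MeasureTheory Metric Set Filter Topology
open scoped ENNReal NNReal

noncomputable section

open Paper

namespace S15

abbrev R2 : Type := EuclideanSpace ℝ (Fin 2)
abbrev Ball := R2 × ℝ

noncomputable instance (priority := 2000) : DecidableEq Ball := Classical.decEq _

noncomputable instance (priority := 2000) : BEq Ball := instBEqOfDecidableEq

instance (priority := 2000) : LawfulBEq Ball where
  eq_of_beq h := of_decide_eq_true h
  rfl := by simp [BEq.beq]

noncomputable def merge (p q : Ball) : Ball :=
  (p.1 + (if p.2 + q.2 = 0 then 0 else q.2 / (p.2 + q.2)) • (q.1 - p.1), p.2 + q.2)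

lemma merge_snd (p q : Ball) : (merge p q).2 = p.2 + q.2 := rfl

lemma dist_merge_left (p q : Ball) (hq : 0 ≤ q.2)
    (h : dist p.1 q.1 ≤ p.2 + q.2) : dist p.1 (merge p q).1 ≤ q.2 := by
  unfold merge
  by_cases hs : p.2 + q.2 = 0
  · simp [hs, hq]
  · have hspos : 0 < p.2 + q.2 := by
      rcases lt_or_gt_of_ne hs with h1 | h1
      · exact ((not_le.mpr h1) (dist_nonneg.trans h)).elim
      · exact h1
    have hw : (0:ℝ) ≤ q.2 / (p.2 + q.2) := div_nonneg hq hspos.le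
    simp only [hs, if_false]
    rw [dist_self_add_right, norm_smul, Real.norm_eq_abs, abs_of_nonneg hw,
      ← dist_eq_norm']
    calc q.2 / (p.2 + q.2) * dist p.1 q.1 ≤ q.2 / (p.2 + q.2) * (p.2 + q.2) :=
        mul_le_mul_of_nonneg_left h hw
      _ = q.2 := div_mul_cancel₀ _ hs

lemma dist_merge_right (p q : Ball) (hp : 0 ≤ p.2) (hq : 0 ≤ q.2)
    (h : dist p.1 q.1 ≤ p.2 + q.2) : dist q.1 (merge p q).1 ≤ p.2 := by
  unfold merge
  by_cases hs : p.2 + q.2 = 0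
  · have hp0 : p.2 = 0 := le_antisymm (by linarith) hp
    have hd : p.1 = q.1 := by
      have : dist p.1 q.1 = 0 := le_antisymm (by linarith) dist_nonneg
      exact dist_eq_zero.mp this
    simp [hs, hp0, hd]
  · have hspos : 0 < p.2 + q.2 := by
      rcases lt_or_gt_of_ne hs with h1 | h1
      · exact ((not_le.mpr h1) (dist_nonneg.trans h)).elim
      · exact h1
    simp only [hs, if_false]
    have key : q.1 - (p.1 + (q.2 / (p.2 + q.2)) • (q.1 - p.1))
        = (p.2 / (p.2 + q.2)) • (q.1 - p.1) := by
      have : (p.2 / (p.2 + q.2)) = 1 - q.2 / (p.2 + q.2) := by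
        field_simp
        ring
      rw [this, sub_smul, one_smul]
      abel
    rw [dist_eq_norm, key, norm_smul, Real.norm_eq_abs,
      abs_of_nonneg (div_nonneg hp hspos.le), ← dist_eq_norm']
    calc p.2 / (p.2 + q.2) * dist p.1 q.1 ≤ p.2 / (p.2 + q.2) * (p.2 + q.2) :=
        mul_le_mul_of_nonneg_left h (div_nonneg hp hspos.le)
      _ = p.2 := div_mul_cancel₀ _ hs

lemma merge_subset_left (p q : Ball) (hq : 0 ≤ q.2)
    (h : dist p.1 q.1 ≤ p.2 + q.2) :
    closedBall p.1 p.2 ⊆ closedBall (merge p q).1 (merge p q).2 :=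
  closedBall_subset_closedBall' (by
    rw [merge_snd]
    have := dist_merge_left p q hq h
    linarith)

lemma merge_subset_right (p q : Ball) (hp : 0 ≤ p.2) (hq : 0 ≤ q.2)
    (h : dist p.1 q.1 ≤ p.2 + q.2) :
    closedBall q.1 q.2 ⊆ closedBall (merge p q).1 (merge p q).2 :=
  closedBall_subset_closedBall' (by
    rw [merge_snd]
    have := dist_merge_right p q hp hq h
    linarith)


/-- Some pair of (distinct positions of) balls overlaps. -/
def Bad (l : List Ball) : Prop :=
  ∃ x ∈ l, ∃ y ∈ l.erase x, dist x.1 y.1 ≤ x.2 + y.2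

/-- All pairs of (distinct positions of) balls are strictly separated. -/
def GoodAt (l : List Ball) : Prop :=
  ∀ x ∈ l, ∀ y ∈ l.erase x, x.2 + y.2 < dist x.1 y.1

lemma not_bad_iff (l : List Ball) : ¬ Bad l ↔ GoodAt l := by
  unfold Bad GoodAt
  push_neg
  rfl

noncomputable local instance (l : List Ball) : Decidable (Bad l) := Classical.dec _

lemma erase_erase_len {l : List Ball} {x y : Ball} (hx : x ∈ l) (hy : y ∈ l.erase x) :
    (merge x y :: (l.erase x).erase y).length < l.length := by
  have h1 : (l.erase x).length = l.length - 1 := List.length_erase_of_mem hx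
  have h2 : ((l.erase x).erase y).length = (l.erase x).length - 1 :=
    List.length_erase_of_mem hy
  have h3 : 1 ≤ (l.erase x).length := List.length_pos_iff.mpr (List.ne_nil_of_mem hy)
  have h4 : 2 ≤ l.length := by omega
  simp only [List.length_cons, h2, h1]
  omega

noncomputable def disjointify (l : List Ball) : List Ball :=
  if h : Bad l then
    disjointify (merge h.choose h.choose_spec.2.choose ::
      ((l.erase h.choose).erase h.choose_spec.2.choose))
  else l
termination_by l.length
decreasing_by
  exact erase_erase_len h.choose_spec.1 h.choose_spec.2.choose_spec.1

lemma d_good (l : List Ball) : GoodAt (disjointify l) := by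
  rw [← not_bad_iff]
  suffices h : ∀ n (l : List Ball), l.length ≤ n → ¬ Bad (disjointify l) from
    h l.length l le_rfl
  intro n
  induction n using Nat.strong_induction_on with
  | _ n ih =>
    intro l hl
    rw [disjointify]
    split
    · next h =>
      exact ih _ (lt_of_lt_of_le
        (erase_erase_len h.choose_spec.1 h.choose_spec.2.choose_spec.1) hl) _ le_rfl
    · next h => exact h

lemma d_pos (l : List Ball) (hl : ∀ p ∈ l, 0 ≤ p.2) : ∀ p ∈ disjointify l, 0 ≤ p.2 := by
  revert hl
  suffices h : ∀ n (l : List Ball), l.length ≤ n → (∀ p ∈ l, 0 ≤ p.2) →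
      ∀ p ∈ disjointify l, 0 ≤ p.2 from h l.length l le_rfl
  intro n
  induction n using Nat.strong_induction_on with
  | _ n ih =>
    intro l hln hl
    rw [disjointify]
    split
    · next h =>
      refine ih _ (lt_of_lt_of_le
        (erase_erase_len h.choose_spec.1 h.choose_spec.2.choose_spec.1) hln) _ le_rfl ?_
      intro p hp
      rcases List.mem_cons.mp hp with hp | hp
      · subst hp
        rw [merge_snd]
        have h1 := hl _ h.choose_spec.1
        have h2 := hl _ (List.mem_of_mem_erase h.choose_spec.2.choose_spec.1)
        linarith
      · exact hl _ (List.mem_of_mem_erase (List.mem_of_mem_erase hp))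
    · next => exact hl

lemma d_ne (l : List Ball) (hl : l ≠ []) : disjointify l ≠ [] := by
  revert hl
  suffices h : ∀ n (l : List Ball), l.length ≤ n → l ≠ [] → disjointify l ≠ [] from
    h l.length l le_rfl
  intro n
  induction n using Nat.strong_induction_on with
  | _ n ih =>
    intro l hln hl
    rw [disjointify]
    split
    · next h =>
      exact ih _ (lt_of_lt_of_le
        (erase_erase_len h.choose_spec.1 h.choose_spec.2.choose_spec.1) hln) _ le_rfl
        (List.cons_ne_nil _ _)
    · next => exact hl

lemma sum_erase {l : List Ball} {x : Ball} (hx : x ∈ l) :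
    (l.map Prod.snd).sum = x.2 + ((l.erase x).map Prod.snd).sum := by
  have := (List.perm_cons_erase hx).map Prod.snd
  rw [this.sum_eq]
  simp

lemma d_sum (l : List Ball) :
    ((disjointify l).map Prod.snd).sum = (l.map Prod.snd).sum := by
  suffices h : ∀ n (l : List Ball), l.length ≤ n →
      ((disjointify l).map Prod.snd).sum = (l.map Prod.snd).sum from h l.length l le_rfl
  intro n
  induction n using Nat.strong_induction_on with
  | _ n ih =>
    intro l hln
    rw [disjointify]
    split
    · next h =>
      rw [ih _ (lt_of_lt_of_le
        (erase_erase_len h.choose_spec.1 h.choose_spec.2.choose_spec.1) hln) _ le_rfl]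
      rw [List.map_cons, List.sum_cons, merge_snd,
        sum_erase h.choose_spec.1, sum_erase h.choose_spec.2.choose_spec.1]
      ring
    · next => rfl

lemma d_cover (l : List Ball) (hl : ∀ p ∈ l, 0 ≤ p.2) :
    ∀ p ∈ l, ∃ q ∈ disjointify l, closedBall p.1 p.2 ⊆ closedBall q.1 q.2 := by
  revert hl
  suffices h : ∀ n (l : List Ball), l.length ≤ n → (∀ p ∈ l, 0 ≤ p.2) →
      ∀ p ∈ l, ∃ q ∈ disjointify l, closedBall p.1 p.2 ⊆ closedBall q.1 q.2 from
    h l.length l le_rfl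
  intro n
  induction n using Nat.strong_induction_on with
  | _ n ih =>
    intro l hln hl
    rw [disjointify]
    split
    · next h =>
      set x := h.choose with hxdef
      set y := h.choose_spec.2.choose with hydef
      have hx : x ∈ l := h.choose_spec.1
      have hy : y ∈ l.erase x := h.choose_spec.2.choose_spec.1
      have hxy : dist x.1 y.1 ≤ x.2 + y.2 := h.choose_spec.2.choose_spec.2
      have hx2 : 0 ≤ x.2 := hl _ hx
      have hy2 : 0 ≤ y.2 := hl _ (List.mem_of_mem_erase hy)
      have hpos' : ∀ p ∈ merge x y :: (l.erase x).erase y, 0 ≤ p.2 := by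
        intro p hp
        rcases List.mem_cons.mp hp with hp | hp
        · subst hp; rw [merge_snd]; positivity
        · exact hl _ (List.mem_of_mem_erase (List.mem_of_mem_erase hp))
      have IH := ih _ (lt_of_lt_of_le (erase_erase_len hx hy) hln) _ le_rfl hpos'
      intro p hp
      by_cases hpe : p ∈ (l.erase x).erase y
      · exact IH p (List.mem_cons_of_mem _ hpe)
      · have hsub : closedBall p.1 p.2 ⊆ closedBall (merge x y).1 (merge x y).2 := by
          by_cases hpx : p = x
          · subst hpx; exact merge_subset_left _ _ hy2 hxy
          · have hpl : p ∈ l.erase x := (List.mem_erase_of_ne (l := l) (b := x) hpx).mpr hp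
            by_cases hpy : p = y
            · subst hpy; exact merge_subset_right _ _ hx2 hy2 hxy
            · exact absurd ((List.mem_erase_of_ne (l := l.erase x) (b := y) hpy).mpr hpl) hpe
        obtain ⟨q, hq, hq2⟩ := IH (merge x y) List.mem_cons_self
        exact ⟨q, hq, hsub.trans hq2⟩
    · next => exact fun p hp => ⟨p, hp, subset_rfl⟩

lemma d_shrink (l : List Ball) (h : Bad l) : (disjointify l).length < l.length := by
  have hle : ∀ n (m : List Ball), m.length ≤ n → (disjointify m).length ≤ m.length := by
    intro n
    induction n with
    | zero => intro m hm; rw [disjointify]; split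
              · next h' => exact absurd h'.choose_spec.1 (by simp [List.length_eq_zero_iff.mp (Nat.le_zero.mp hm)])
              · next => exact le_rfl
    | succ n ihn =>
      intro m hm
      rw [disjointify]
      split
      · next h' =>
        have hlen := erase_erase_len h'.choose_spec.1 h'.choose_spec.2.choose_spec.1
        exact le_trans (ihn _ (by omega)) (by omega)
      · next => exact le_rfl
  rw [disjointify, dif_pos h]
  have hlen := erase_erase_len h.choose_spec.1 h.choose_spec.2.choose_spec.1
  exact lt_of_le_of_lt (hle _ _ le_rfl) hlen

/-! ### Growth and collision times -/

noncomputable def grow (c : ℝ) (l : List Ball) : List Ball :=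
  l.map fun p => (p.1, p.2 * Real.exp c)

lemma grow_inj (c : ℝ) : Function.Injective (fun p : Ball => (p.1, p.2 * Real.exp c)) := by
  rintro ⟨a, r⟩ ⟨b, s⟩ h
  simp only [Prod.mk.injEq] at h ⊢
  exact ⟨h.1, mul_right_cancel₀ (Real.exp_ne_zero c) h.2⟩

lemma grow_erase (c : ℝ) (l : List Ball) (x : Ball) :
    grow c (l.erase x) = (grow c l).erase (x.1, x.2 * Real.exp c) :=
  List.map_erase (grow_inj c) l

/-- The set of future collision times of the configuration `l` of balls, grown
exponentially starting from time `t0`. -/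
def colS (l : List Ball) (t0 : ℝ) : Set ℝ :=
  { s | ∃ x ∈ l, ∃ y ∈ l.erase x, 0 < x.2 + y.2 ∧
      s = t0 + Real.log (dist x.1 y.1 / (x.2 + y.2)) }

lemma colS_finite (l : List Ball) (t0 : ℝ) : (colS l t0).Finite := by
  have hsub : colS l t0 ⊆
      (fun xy : Ball × Ball => t0 + Real.log (dist xy.1.1 xy.2.1 / (xy.1.2 + xy.2.2))) ''
        ↑(l.toFinset ×ˢ l.toFinset) := by
    rintro s ⟨x, hx, y, hy, -, rfl⟩
    refine ⟨(x, y), ?_, rfl⟩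
    simp only [Finset.coe_product, Set.mem_prod, Finset.mem_coe, List.mem_toFinset]
    exact ⟨hx, List.mem_of_mem_erase hy⟩
  exact (Set.Finite.image _ (l.toFinset ×ˢ l.toFinset).finite_toSet).subset hsub

lemma colS_gt (l : List Ball) (t0 : ℝ) (hg : GoodAt l) :
    ∀ s ∈ colS l t0, t0 < s := by
  rintro s ⟨x, hx, y, hy, hsum, rfl⟩
  have hd : x.2 + y.2 < dist x.1 y.1 := hg x hx y hy
  have : 0 < Real.log (dist x.1 y.1 / (x.2 + y.2)) :=
    Real.log_pos ((one_lt_div hsum).mpr hd)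
  linarith

lemma dist_le_grow_sum {x y : Ball} (hsum : 0 < x.2 + y.2) :
    dist x.1 y.1 ≤ (x.2 + y.2) * Real.exp (Real.log (dist x.1 y.1 / (x.2 + y.2))) := by
  rcases eq_or_lt_of_le (dist_nonneg (x := x.1) (y := y.1)) with hd | hd
  · rw [← hd]
    positivity
  · rw [Real.exp_log (div_pos hd hsum), mul_div_cancel₀ _ (ne_of_gt hsum)]

lemma evolve_dec (l : List Ball) (t0 : ℝ) (hS : (colS l t0).Nonempty) :
    (disjointify (grow (sInf (colS l t0) - t0) l)).length < l.length := by
  set T := sInf (colS l t0) with hTdef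
  obtain ⟨x, hx, y, hy, hsum, hTeq⟩ := hS.csInf_mem (colS_finite l t0)
  have hbad : Bad (grow (T - t0) l) := by
    refine ⟨(x.1, x.2 * Real.exp (T - t0)), List.mem_map_of_mem (f := fun p : Ball => (p.1, p.2 * Real.exp (T - t0))) hx,
      (y.1, y.2 * Real.exp (T - t0)), ?_, ?_⟩
    · rw [← grow_erase]
      exact List.mem_map_of_mem (f := fun p : Ball => (p.1, p.2 * Real.exp (T - t0))) hy
    · simp only
      have : T - t0 = Real.log (dist x.1 y.1 / (x.2 + y.2)) := by rw [hTdef, hTeq]; ring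
      rw [this]
      calc dist x.1 y.1 ≤ (x.2 + y.2) * Real.exp (Real.log (dist x.1 y.1 / (x.2 + y.2))) :=
            dist_le_grow_sum hsum
        _ = x.2 * Real.exp (Real.log (dist x.1 y.1 / (x.2 + y.2)))
            + y.2 * Real.exp (Real.log (dist x.1 y.1 / (x.2 + y.2))) := by ring
  calc (disjointify (grow (T - t0) l)).length < (grow (T - t0) l).length :=
        d_shrink _ hbad
    _ = l.length := List.length_map _

noncomputable local instance (l : List Ball) (t0 t : ℝ) :
    Decidable ((colS l t0).Nonempty ∧ sInf (colS l t0) ≤ t) := Classical.dec _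

/-- The configuration of balls at time `t`, grown from configuration `l` at time `t0`,
merging balls whenever they touch. -/
noncomputable def evolve (l : List Ball) (t0 t : ℝ) : List Ball :=
  if h : (colS l t0).Nonempty ∧ sInf (colS l t0) ≤ t then
    evolve (disjointify (grow (sInf (colS l t0) - t0) l)) (sInf (colS l t0)) t
  else grow (t - t0) l
termination_by l.length
decreasing_by exact evolve_dec l t0 h.1

def Inv (l : List Ball) : Prop := (∀ p ∈ l, 0 ≤ p.2) ∧ l ≠ [] ∧ GoodAt l

lemma inv_newl {l : List Ball} (t0 : ℝ) (hI : Inv l) :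
    Inv (disjointify (grow (sInf (colS l t0) - t0) l)) := by
  obtain ⟨hpos, hne, hg⟩ := hI
  refine ⟨d_pos _ ?_, d_ne _ ?_, d_good _⟩
  · rintro p hp
    obtain ⟨x, hx, rfl⟩ := List.mem_map.mp hp
    have := hpos x hx
    positivity
  · simp only [grow, ne_eq, List.map_eq_nil_iff]
    exact hne

lemma good_grow {l : List Ball} {t0 t : ℝ} (hI : Inv l)
    (h : colS l t0 = ∅ ∨ t < sInf (colS l t0)) : GoodAt (grow (t - t0) l) := by
  obtain ⟨hpos, -, hg⟩ := hI
  rintro x' hx' y' hy'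
  obtain ⟨x, hx, rfl⟩ := List.mem_map.mp hx'
  rw [← grow_erase] at hy'
  obtain ⟨y, hy, rfl⟩ := List.mem_map.mp hy'
  simp only
  have hdist : x.2 + y.2 < dist x.1 y.1 := hg x hx y hy
  rcases le_or_gt (x.2 + y.2) 0 with hsum | hsum
  · have hx2 := hpos x hx
    have hy2 := hpos y (List.mem_of_mem_erase hy)
    have hx0 : x.2 = 0 := le_antisymm (by linarith) hx2
    have hy0 : y.2 = 0 := le_antisymm (by linarith) hy2
    rw [hx0, hy0]
    simpa [hx0, hy0] using hdist
  · have hmem : t0 + Real.log (dist x.1 y.1 / (x.2 + y.2)) ∈ colS l t0 :=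
      ⟨x, hx, y, hy, hsum, rfl⟩
    have hlt : t < t0 + Real.log (dist x.1 y.1 / (x.2 + y.2)) := by
      rcases h with h | h
      · exact absurd hmem (h ▸ Set.notMem_empty _)
      · exact lt_of_lt_of_le h (csInf_le (colS_finite l t0).bddBelow hmem)
    have hexp : Real.exp (t - t0) < dist x.1 y.1 / (x.2 + y.2) := by
      have := Real.exp_lt_exp.mpr (show t - t0 < Real.log (dist x.1 y.1 / (x.2 + y.2)) by
        linarith)
      rwa [Real.exp_log (div_pos (by linarith) hsum)] at this
    have := (mul_lt_mul_of_pos_left hexp hsum)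
    rw [mul_div_cancel₀ _ (ne_of_gt hsum)] at this
    nlinarith [Real.exp_pos (t - t0)]

lemma e_inv (l : List Ball) (t0 t : ℝ) (hI : Inv l) :
    (∀ p ∈ evolve l t0 t, 0 ≤ p.2) ∧ evolve l t0 t ≠ [] ∧ GoodAt (evolve l t0 t) := by
  revert hI
  suffices h : ∀ n (l : List Ball), l.length ≤ n → ∀ t0, Inv l →
      (∀ p ∈ evolve l t0 t, 0 ≤ p.2) ∧ evolve l t0 t ≠ [] ∧ GoodAt (evolve l t0 t) from
    h l.length l le_rfl t0
  intro n
  induction n using Nat.strong_induction_on with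
  | _ n ih =>
    intro l hln t0 hI
    rw [evolve]
    split
    · next h =>
      exact ih _ (lt_of_lt_of_le (evolve_dec l t0 h.1) hln) _ le_rfl _ (inv_newl t0 hI)
    · next h =>
      obtain ⟨hpos, hne, hg⟩ := hI
      refine ⟨?_, ?_, ?_⟩
      · rintro p hp
        obtain ⟨x, hx, rfl⟩ := List.mem_map.mp hp
        have := hpos x hx
        positivity
      · simp only [grow, ne_eq, List.map_eq_nil_iff]
        exact hne
      · refine good_grow ⟨hpos, hne, hg⟩ ?_
        by_cases hS : (colS l t0).Nonempty
        · right
          by_contra h'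
          exact h ⟨hS, not_lt.mp h'⟩
        · left
          exact Set.not_nonempty_iff_eq_empty.mp hS

lemma grow_map_snd (c : ℝ) (l : List Ball) :
    ((grow c l).map Prod.snd).sum = Real.exp c * (l.map Prod.snd).sum := by
  rw [← List.sum_map_mul_left]
  unfold grow
  rw [List.map_map]
  congr 1
  apply List.map_congr_left
  intro p _
  simp [mul_comm]

lemma e_sum (l : List Ball) (t0 t : ℝ) :
    ((evolve l t0 t).map Prod.snd).sum = Real.exp (t - t0) * (l.map Prod.snd).sum := by
  suffices h : ∀ n (l : List Ball), l.length ≤ n → ∀ t0,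
      ((evolve l t0 t).map Prod.snd).sum = Real.exp (t - t0) * (l.map Prod.snd).sum from
    h l.length l le_rfl t0
  intro n
  induction n using Nat.strong_induction_on with
  | _ n ih =>
    intro l hln t0
    rw [evolve]
    split
    · next h =>
      rw [ih _ (lt_of_lt_of_le (evolve_dec l t0 h.1) hln) _ le_rfl _, d_sum, grow_map_snd,
        ← mul_assoc, ← Real.exp_add]
      ring_nf
    · next h => exact grow_map_snd _ _
lemma e_cover (l : List Ball) (t0 s : ℝ) (hI : Inv l) (hs : t0 ≤ s) :
    ∀ p ∈ l, ∃ q ∈ evolve l t0 s, closedBall p.1 p.2 ⊆ closedBall q.1 q.2 := by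
  revert hI hs
  suffices h : ∀ n (l : List Ball), l.length ≤ n → ∀ t0, Inv l → t0 ≤ s →
      ∀ p ∈ l, ∃ q ∈ evolve l t0 s, closedBall p.1 p.2 ⊆ closedBall q.1 q.2 by
    intro hI hs
    exact h l.length l le_rfl t0 hI hs
  intro n
  induction n using Nat.strong_induction_on with
  | _ n ih =>
    intro l hln t0 hI hs p hp
    have hp2 : 0 ≤ p.2 := hI.1 p hp
    rw [evolve]
    split
    · next h =>
      set T := sInf (colS l t0) with hTdef
      have hT : t0 < T := colS_gt l t0 hI.2.2 T (h.1.csInf_mem (colS_finite l t0))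
      have hsub1 : closedBall p.1 p.2 ⊆ closedBall p.1 (p.2 * Real.exp (T - t0)) :=
        closedBall_subset_closedBall (by
          nlinarith [Real.one_le_exp (show (0:ℝ) ≤ T - t0 by linarith)])
      have hmem1 : (p.1, p.2 * Real.exp (T - t0)) ∈ grow (T - t0) l :=
        List.mem_map_of_mem (f := fun p : Ball => (p.1, p.2 * Real.exp (T - t0))) hp
      obtain ⟨m, hm, hm2⟩ := d_cover (grow (T - t0) l) (inv_newl t0 hI |>.1 |> fun _ => by
        rintro q hq
        obtain ⟨x, hx, rfl⟩ := List.mem_map.mp hq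
        have := hI.1 x hx
        positivity) _ hmem1
      obtain ⟨q, hq, hq2⟩ := ih _ (lt_of_lt_of_le (evolve_dec l t0 h.1) hln) _ le_rfl _
        (inv_newl t0 hI) h.2 m hm
      exact ⟨q, hq, (hsub1.trans hm2).trans hq2⟩
    · next h =>
      refine ⟨(p.1, p.2 * Real.exp (s - t0)), List.mem_map_of_mem (f := fun p : Ball => (p.1, p.2 * Real.exp (s - t0))) hp,
        closedBall_subset_closedBall ?_⟩
      show p.2 ≤ p.2 * Real.exp (s - t0)
      nlinarith [Real.one_le_exp (show (0:ℝ) ≤ s - t0 by linarith)]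

lemma e_mono (l : List Ball) (t0 t s : ℝ) (hI : Inv l) (hts : t ≤ s) :
    ∀ p ∈ evolve l t0 t, ∃ q ∈ evolve l t0 s, closedBall p.1 p.2 ⊆ closedBall q.1 q.2 := by
  revert hI
  suffices h : ∀ n (l : List Ball), l.length ≤ n → ∀ t0, Inv l →
      ∀ p ∈ evolve l t0 t, ∃ q ∈ evolve l t0 s, closedBall p.1 p.2 ⊆ closedBall q.1 q.2 from
    fun hI => h l.length l le_rfl t0 hI
  intro n
  induction n using Nat.strong_induction_on with
  | _ n ih =>
    intro l hln t0 hI p hp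
    by_cases hCt : (colS l t0).Nonempty ∧ sInf (colS l t0) ≤ t
    · have hCs : (colS l t0).Nonempty ∧ sInf (colS l t0) ≤ s := ⟨hCt.1, hCt.2.trans hts⟩
      rw [evolve, dif_pos hCt] at hp
      rw [evolve, dif_pos hCs]
      exact ih _ (lt_of_lt_of_le (evolve_dec l t0 hCt.1) hln) _ le_rfl _
        (inv_newl t0 hI) p hp
    · rw [evolve, dif_neg hCt] at hp
      obtain ⟨x, hx, rfl⟩ := List.mem_map.mp hp
      have hx2 : 0 ≤ x.2 := hI.1 x hx
      by_cases hCs : (colS l t0).Nonempty ∧ sInf (colS l t0) ≤ s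
      · set T := sInf (colS l t0) with hTdef
        have htT : t < T := by
          by_contra h'
          exact hCt ⟨hCs.1, not_lt.mp h'⟩
        have hsub1 : closedBall x.1 (x.2 * Real.exp (t - t0))
            ⊆ closedBall x.1 (x.2 * Real.exp (T - t0)) :=
          closedBall_subset_closedBall (by
            have := Real.exp_le_exp.mpr (show t - t0 ≤ T - t0 by linarith)
            nlinarith)
        have hmem1 : (x.1, x.2 * Real.exp (T - t0)) ∈ grow (T - t0) l :=
          List.mem_map_of_mem (f := fun p : Ball => (p.1, p.2 * Real.exp (T - t0))) hx
        have hposg : ∀ q ∈ grow (T - t0) l, 0 ≤ q.2 := by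
          rintro q hq
          obtain ⟨z, hz, rfl⟩ := List.mem_map.mp hq
          have := hI.1 z hz
          positivity
        obtain ⟨m, hm, hm2⟩ := d_cover (grow (T - t0) l) hposg _ hmem1
        obtain ⟨q, hq, hq2⟩ := e_cover _ T s (inv_newl t0 hI) hCs.2 m hm
        rw [evolve, dif_pos hCs]
        exact ⟨q, hq, (hsub1.trans hm2).trans hq2⟩
      · rw [evolve, dif_neg hCs]
        refine ⟨(x.1, x.2 * Real.exp (s - t0)), List.mem_map_of_mem (f := fun p : Ball => (p.1, p.2 * Real.exp (s - t0))) hx,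
          closedBall_subset_closedBall ?_⟩
        show x.2 * Real.exp (t - t0) ≤ x.2 * Real.exp (s - t0)
        have := Real.exp_le_exp.mpr (show t - t0 ≤ s - t0 by linarith)
        nlinarith

lemma grow_toFinset (l : List Ball) (t0 t : ℝ) :
    (grow (t - t0) l).toFinset = Finset.image
      (fun i : Fin l.length => ((l.get i).1, ((l.get i).2 * Real.exp (-t0)) * Real.exp t))
      Finset.univ := by
  have harg : ∀ p : Ball, p.2 * Real.exp (-t0) * Real.exp t = p.2 * Real.exp (t - t0) := by
    intro p
    rw [mul_assoc, ← Real.exp_add]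
    ring_nf
  ext q
  simp only [List.mem_toFinset, grow, List.mem_map, Finset.mem_image, Finset.mem_univ,
    true_and]
  constructor
  · rintro ⟨x, hx, rfl⟩
    obtain ⟨i, rfl⟩ := List.mem_iff_get.mp hx
    exact ⟨i, by rw [harg]⟩
  · rintro ⟨i, rfl⟩
    exact ⟨l.get i, List.get_mem l i, by rw [harg]⟩

lemma e_struct (l : List Ball) (t0 : ℝ) (hI : Inv l) :
    ∃ m : ℕ, 0 < m ∧ ∃ I : Fin m → Set ℝ,
      (Pairwise fun j j' => Disjoint (I j) (I j')) ∧ (⋃ j, I j) = Set.Ici t0 ∧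
      (∀ j, (I j).OrdConnected) ∧
      ∀ j, ∃ (k : ℕ) (a : Fin k → R2) (ρ : Fin k → ℝ), (∀ i, 0 ≤ ρ i) ∧
        ∀ t ∈ I j, (evolve l t0 t).toFinset =
          Finset.image (fun i => (a i, ρ i * Real.exp t)) Finset.univ := by
  revert hI
  suffices h : ∀ n (l : List Ball), l.length ≤ n → ∀ t0, Inv l →
      ∃ m : ℕ, 0 < m ∧ ∃ I : Fin m → Set ℝ,
      (Pairwise fun j j' => Disjoint (I j) (I j')) ∧ (⋃ j, I j) = Set.Ici t0 ∧
      (∀ j, (I j).OrdConnected) ∧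
      ∀ j, ∃ (k : ℕ) (a : Fin k → R2) (ρ : Fin k → ℝ), (∀ i, 0 ≤ ρ i) ∧
        ∀ t ∈ I j, (evolve l t0 t).toFinset =
          Finset.image (fun i => (a i, ρ i * Real.exp t)) Finset.univ from
    fun hI => h l.length l le_rfl t0 hI
  intro n
  induction n using Nat.strong_induction_on with
  | _ n ih =>
    intro l hln t0 hI
    by_cases hS : (colS l t0).Nonempty
    · set T := sInf (colS l t0) with hTdef
      have hT : t0 < T := colS_gt l t0 hI.2.2 T (hS.csInf_mem (colS_finite l t0))
      obtain ⟨m, hm, J, hJd, hJu, hJo, hJP⟩ :=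
        ih _ (lt_of_lt_of_le (evolve_dec l t0 hS) hln) _ le_rfl T (inv_newl t0 hI)
      have hJsub : ∀ j, J j ⊆ Set.Ici T := fun j => hJu ▸ Set.subset_iUnion J j
      refine ⟨m + 1, Nat.succ_pos m, Fin.cases (Set.Ico t0 T) J, ?_, ?_, ?_, ?_⟩
      · intro j j' hne
        rcases Fin.eq_zero_or_eq_succ j with rfl | ⟨j1, rfl⟩ <;>
          rcases Fin.eq_zero_or_eq_succ j' with rfl | ⟨j2, rfl⟩
        · exact absurd rfl hne
        · simp only [Fin.cases_zero, Fin.cases_succ]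
          exact Set.disjoint_left.mpr fun x hx hx' =>
            absurd (hJsub j2 hx') (not_le.mpr hx.2)
        · simp only [Fin.cases_zero, Fin.cases_succ]
          exact Set.disjoint_right.mpr fun x hx hx' =>
            absurd (hJsub j1 hx') (not_le.mpr hx.2)
        · simp only [Fin.cases_succ]
          exact hJd (fun h => hne (congrArg Fin.succ h))
      · apply Set.Subset.antisymm
        · refine Set.iUnion_subset fun j => ?_
          rcases Fin.eq_zero_or_eq_succ j with rfl | ⟨j1, rfl⟩
          · simp only [Fin.cases_zero]
            exact (Set.Ico_subset_Ici_self).trans (Set.Ici_subset_Ici.mpr le_rfl)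
          · simp only [Fin.cases_succ]
            exact (hJsub j1).trans (Set.Ici_subset_Ici.mpr hT.le)
        · rw [← Set.Ico_union_Ici_eq_Ici hT.le]
          apply Set.union_subset
          · exact le_of_eq (by simp) |>.trans (Set.subset_iUnion _ (0 : Fin (m + 1)))
          · rw [← hJu]
            refine Set.iUnion_subset fun j1 => ?_
            exact le_of_eq (by simp) |>.trans (Set.subset_iUnion _ j1.succ)
      · intro j
        rcases Fin.eq_zero_or_eq_succ j with rfl | ⟨j1, rfl⟩
        · simpa using Set.ordConnected_Ico
        · simpa using hJo j1
      · intro j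
        rcases Fin.eq_zero_or_eq_succ j with rfl | ⟨j1, rfl⟩
        · refine ⟨l.length, fun i => (l.get i).1,
            fun i => (l.get i).2 * Real.exp (-t0), fun i => ?_, ?_⟩
          · have := hI.1 (l.get i) (List.get_mem l i)
            positivity
          · intro t ht
            simp only [Fin.cases_zero] at ht
            rw [evolve, dif_neg (by
              rintro ⟨-, hle⟩
              exact absurd (lt_of_le_of_lt hle ht.2) (lt_irrefl T))]
            exact grow_toFinset l t0 t
        · obtain ⟨k, a, ρ, hρ, hP⟩ := hJP j1
          refine ⟨k, a, ρ, hρ, fun t ht => ?_⟩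
          simp only [Fin.cases_succ] at ht
          rw [evolve, dif_pos ⟨hS, hJsub j1 ht⟩]
          exact hP t ht
    · refine ⟨1, Nat.one_pos, fun _ => Set.Ici t0, ?_, ?_, fun _ => Set.ordConnected_Ici,
        fun j => ?_⟩
      · intro j j' hne
        exact absurd (Subsingleton.elim j j') hne
      · exact Set.iUnion_const _
      · refine ⟨l.length, fun i => (l.get i).1,
          fun i => (l.get i).2 * Real.exp (-t0), fun i => ?_, fun t _ => ?_⟩
        · have := hI.1 (l.get i) (List.get_mem l i)
          positivity
        · rw [evolve, dif_neg (fun h => hS h.1)]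
          exact grow_toFinset l t0 t

lemma good_nodup (l : List Ball) (hg : GoodAt l) (hp : ∀ p ∈ l, 0 ≤ p.2) : l.Nodup := by
  rw [List.nodup_iff_count_le_one]
  intro a
  by_contra hcnt
  push_neg at hcnt
  have h2 : 2 ≤ List.count a l := hcnt
  have ha : a ∈ l := List.count_pos_iff.mp (by omega)
  have ha2 : a ∈ l.erase a := by
    rw [← List.count_pos_iff, List.count_erase_self]
    omega
  have := hg a ha a ha2
  rw [dist_self] at this
  have := hp a ha
  linarith
lemma sum_two_mul (l : List Ball) :
    (l.map (fun p => 2 * p.2)).sum = 2 * (l.map Prod.snd).sum := by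
  induction l with
  | nil => simp
  | cons a l ih =>
    simp only [List.map_cons, List.sum_cons, ih]
    ring
end S15


/-- The ball-growth construction: given a finite collection `B₀` of
closed balls with nonempty union, there is a family `B(t)`, `t ≥ 0`, of finite collections
of pairwise disjoint nonempty closed balls covering `B₀`, monotone in `t`, growing
exponentially on finitely many intervals, and whose total diameter is `e^t` times that of
`B₀`. Balls are encoded by their centre and (nonnegative) radius. -/
theorem statement15 [DecidableEq (R2 × ℝ)] (B₀ : Finset (R2 × ℝ)) (hB₀ : ∀ p ∈ B₀, 0 ≤ p.2) (hne : B₀.Nonempty) :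
    ∃ B : ℝ → Finset (R2 × ℝ),
      (∀ t : ℝ, 0 ≤ t → (∀ p ∈ B t, 0 ≤ p.2) ∧ (B t).Nonempty ∧
        ((B t : Set (R2 × ℝ)).Pairwise fun p q =>
          Disjoint (Metric.closedBall p.1 p.2) (Metric.closedBall q.1 q.2))) ∧
      -- (i) every ball of `B₀` is contained in a ball of `B 0`
      (∀ p ∈ B₀, ∃ q ∈ B 0, Metric.closedBall p.1 p.2 ⊆ Metric.closedBall q.1 q.2) ∧
      -- (ii) monotonicity
      (∀ t s : ℝ, 0 ≤ t → t ≤ s → ∀ p ∈ B t, ∃ q ∈ B s,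
        Metric.closedBall p.1 p.2 ⊆ Metric.closedBall q.1 q.2) ∧
      -- (iii) finitely many intervals of exponential growth
      (∃ ℓ : ℕ, 0 < ℓ ∧ ∃ I : Fin ℓ → Set ℝ,
        (Pairwise fun j j' => Disjoint (I j) (I j')) ∧ (⋃ j, I j) = Set.Ici (0:ℝ) ∧
        (∀ j, (I j).OrdConnected) ∧
        ∀ j, ∃ (kj : ℕ) (a : Fin kj → R2) (ρ : Fin kj → ℝ), (∀ i, 0 ≤ ρ i) ∧
          ∀ t ∈ I j, B t = Finset.image (fun i => (a i, ρ i * Real.exp t)) Finset.univ) ∧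
      -- (iv) exponential growth of the total diameter
      (∀ t : ℝ, 0 ≤ t → ∑ p ∈ B t, 2 * p.2 = Real.exp t * ∑ p ∈ B₀, 2 * p.2) := by
  rename_i inst
  have hinst : inst = S15.instDecidableEqBall := Subsingleton.elim _ _
  subst hinst
  have hpos0 : ∀ p ∈ B₀.toList, 0 ≤ p.2 := fun p hp => hB₀ p (Finset.mem_toList.mp hp)
  set l₀ : List S15.Ball := S15.disjointify B₀.toList with hl₀
  have hInv0 : S15.Inv l₀ :=
    ⟨S15.d_pos _ hpos0, S15.d_ne _ hne.toList_ne_nil, S15.d_good _⟩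
  refine ⟨fun t => (S15.evolve l₀ 0 t).toFinset, ?_, ?_, ?_, ?_, ?_⟩
  · intro t _
    obtain ⟨hp, hn, hg⟩ := S15.e_inv l₀ 0 t hInv0
    refine ⟨fun p hpm => hp p (List.mem_toFinset.mp hpm), ?_, ?_⟩
    · obtain ⟨x, hx⟩ := List.exists_mem_of_ne_nil _ hn
      exact ⟨x, List.mem_toFinset.mpr hx⟩
    · intro p hpm q hqm hpq
      have hp' : p ∈ S15.evolve l₀ 0 t := List.mem_toFinset.mp hpm
      have hq' : q ∈ S15.evolve l₀ 0 t := List.mem_toFinset.mp hqm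
      have hq'' : q ∈ (S15.evolve l₀ 0 t).erase p :=
        (List.mem_erase_of_ne (Ne.symm hpq)).mpr hq'
      exact Metric.closedBall_disjoint_closedBall (hg p hp' q hq'')
  · intro p hp
    obtain ⟨q, hq, hsub⟩ := S15.d_cover B₀.toList hpos0 p (Finset.mem_toList.mpr hp)
    obtain ⟨q', hq', hsub'⟩ := S15.e_cover l₀ 0 0 hInv0 le_rfl q hq
    exact ⟨q', List.mem_toFinset.mpr hq', hsub.trans hsub'⟩
  · intro t s _ hts p hp
    obtain ⟨q, hq, hsub⟩ := S15.e_mono l₀ 0 t s hInv0 hts p (List.mem_toFinset.mp hp)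
    exact ⟨q, List.mem_toFinset.mpr hq, hsub⟩
  · obtain ⟨m, hm, I, hId, hIu, hIo, hIP⟩ := S15.e_struct l₀ 0 hInv0
    exact ⟨m, hm, I, hId, hIu, hIo, hIP⟩
  · intro t _
    obtain ⟨hp, hn, hg⟩ := S15.e_inv l₀ 0 t hInv0
    have hnd : (S15.evolve l₀ 0 t).Nodup := S15.good_nodup _ hg hp
    rw [List.sum_toFinset _ hnd, S15.sum_two_mul, S15.e_sum, S15.d_sum,
      Finset.sum_map_toList, sub_zero]
    have h2 : ∑ p ∈ B₀, 2 * p.2 = 2 * B₀.sum Prod.snd := by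
      rw [Finset.mul_sum]
    rw [h2]
    ring
end
end
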